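/- Upper bound on the cumulative toll–slack product (Lemma 2): Under the toll update dynamics, suppose c_e ≥ 0 for all e ∈ E, and 0 ≤ x^t_e ≤ n for all e ∈ E and t ≥ 1, where n ≥ 0, and let C := max_{e∈E} c_e. Then for every T ≥ 1, Σ_{t=1}^T Σ_{e∈E} τ^t_e (c_e − x^t_e) ≤ γ T |E| (C + n)² / 2. -/

import Mathlib

open Finset

lemma max_zero_sq_le (a : ℝ) : (max a 0) ^ 2 ≤ a ^ 2 := by
  rcases le_or_gt 0 a with h | h
  · rw [max_eq_left h]
  · rw [max_eq_right h.le]; nlinarith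

/-- **Upper bound on the cumulative toll–slack product** (Lemma 2): under the toll update
dynamics with `0 ≤ x^t_e ≤ n` and `c ≥ 0`, letting `C = max_e c_e`, for every `T ≥ 1`,
`Σ_{t=1}^T Σ_e τ^t_e (c_e − x^t_e) ≤ γ T |E| (C + n)² / 2`. -/
theorem cumulative_toll_slack_bound
    {E : Type*} [Fintype E] [Nonempty E]
    (c : E → ℝ) (hc : ∀ e, 0 ≤ c e)
    (γ : ℝ) (hγ : 0 < γ)
    (n : ℝ) (hn : 0 ≤ n)
    (x τ : ℕ → E → ℝ)
    (hx : ∀ t, 1 ≤ t → ∀ e, 0 ≤ x t e ∧ x t e ≤ n)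
    (hτ1 : ∀ e, τ 1 e = 0)
    (hrec : ∀ t, 1 ≤ t → ∀ e, τ (t + 1) e = max (τ t e - γ * (c e - x t e)) 0)
    (T : ℕ) (hT : 1 ≤ T) :
    ∑ t ∈ Finset.Icc 1 T, ∑ e, τ t e * (c e - x t e) ≤
      γ * T * (Fintype.card E) *
        (Finset.univ.sup' Finset.univ_nonempty c + n) ^ 2 / 2 := by
  set C := Finset.univ.sup' Finset.univ_nonempty c with hC
  have hC0 : 0 ≤ C := le_trans (hc (Classical.arbitrary E))
    (Finset.le_sup' c (Finset.mem_univ _))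
  -- per-term bound
  have key : ∀ t, 1 ≤ t → ∀ e : E,
      τ t e * (c e - x t e) ≤
        (τ t e ^ 2 - τ (t + 1) e ^ 2) / (2 * γ) + γ * (C + n) ^ 2 / 2 := by
    intro t ht e
    have hsq : τ (t + 1) e ^ 2 ≤ (τ t e - γ * (c e - x t e)) ^ 2 := by
      rw [hrec t ht e]; exact max_zero_sq_le _
    have hxe := hx t ht e
    have h1 : c e - x t e ≤ C + n := by
      have : c e ≤ C := Finset.le_sup' c (Finset.mem_univ e)
      linarith [hxe.1]
    have h2 : -(C + n) ≤ c e - x t e := by linarith [hc e, hxe.2]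
    have hsq2 : (c e - x t e) ^ 2 ≤ (C + n) ^ 2 := sq_le_sq' h2 h1
    have h2γ : (0:ℝ) < 2 * γ := by linarith
    rw [div_add_div _ _ (by positivity) (by norm_num : (2:ℝ) ≠ 0),
      le_div_iff₀ (by positivity)]
    nlinarith [sq_nonneg (c e - x t e), mul_pos hγ hγ]
  calc ∑ t ∈ Finset.Icc 1 T, ∑ e, τ t e * (c e - x t e)
      ≤ ∑ t ∈ Finset.Icc 1 T, ∑ e : E,
          ((τ t e ^ 2 - τ (t + 1) e ^ 2) / (2 * γ) + γ * (C + n) ^ 2 / 2) := by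
        apply Finset.sum_le_sum
        intro t ht
        rw [Finset.mem_Icc] at ht
        exact Finset.sum_le_sum fun e _ => key t ht.1 e
    _ = (∑ e : E, ∑ t ∈ Finset.Icc 1 T, (τ t e ^ 2 - τ (t + 1) e ^ 2) / (2 * γ))
          + T * (Fintype.card E * (γ * (C + n) ^ 2 / 2)) := by
        simp only [Finset.sum_add_distrib, Finset.sum_const, Finset.card_univ,
          nsmul_eq_mul, Nat.card_Icc, Nat.add_sub_cancel]
        rw [Finset.sum_comm]
    _ ≤ 0 + T * (Fintype.card E * (γ * (C + n) ^ 2 / 2)) := by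
        apply add_le_add_left
        apply Finset.sum_nonpos
        intro e _
        rw [← Finset.sum_div]
        apply div_nonpos_of_nonpos_of_nonneg _ (by linarith)
        have htel : ∀ m, ∑ t ∈ Finset.Icc 1 m, (τ t e ^ 2 - τ (t + 1) e ^ 2) =
            τ 1 e ^ 2 - τ (m + 1) e ^ 2 := by
          intro m
          induction m with
          | zero => simp
          | succ k ih =>
            rw [Finset.sum_Icc_succ_top (Nat.one_le_iff_ne_zero.mpr (Nat.succ_ne_zero k)), ih]
            ring
        rw [htel T, hτ1]
        simp [sq_nonneg]
    _ ≤ γ * T * (Fintype.card E) * (C + n) ^ 2 / 2 := by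
        rw [zero_add]
        apply le_of_eq
        push_cast
        ring
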